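/- Relative entropy is bounded by the Nikaido–Isoda error at the Gibbs fixed point: Let f be continuous on 𝕋^n × 𝕋^n and let μ* = ρ* dx, ν* = η* dx be probability measures on 𝕋^n satisfying the fixed-point relations ρ*(x) = e^{−V_{ν*}(x)} / ∫ e^{−V_{ν*}} dx and η*(y) = e^{U_{μ*}(y)} / ∫ e^{U_{μ*}} dy, where U_μ(y) = ∫ f(x,y) dμ(x) and V_ν(x) = ∫ f(x,y) dν(y). Then for all absolutely continuous μ, ν ∈ 𝒫(𝕋^n) with H(μ) < ∞ and H(ν) < ∞, KL(μ‖μ*) + KL(ν‖ν*) ≤ NI(μ,ν). -/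

import Mathlib

open MeasureTheory

/-- The flat torus `ℝⁿ/ℤⁿ`, modeled as a product of circles of length `1`, equipped with
its (probability) Haar/Lebesgue measure `volume`. -/
abbrev Torus (n : ℕ) := Fin n → AddCircle (1 : ℝ)

/-- The density of a measure on the torus with respect to the Lebesgue (probability) measure. -/
noncomputable def density {n : ℕ} (ν : Measure (Torus n)) : Torus n → ℝ :=
  fun x => (ν.rnDeriv volume x).toReal

/-- A measure has finite entropy `H(ν) = ∫ ρ log ρ dx < ∞` iff it is absolutely continuous with
respect to Lebesgue measure and `ρ log ρ` is integrable. -/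
def entAdmissible {n : ℕ} (ν : Measure (Torus n)) : Prop :=
  ν ≪ (volume : Measure (Torus n)) ∧
    Integrable (fun x => density ν x * Real.log (density ν x)) (volume : Measure (Torus n))

/-- The (negative) entropy `H(ν) = ∫ ρ log ρ dx` of an absolutely continuous measure. -/
noncomputable def Hent {n : ℕ} (ν : Measure (Torus n)) : ℝ :=
  ∫ x, density ν x * Real.log (density ν x)

open Classical in
/-- The payoff functional `F(μ,ν) = ∬ f dμ dν + H(μ) − H(ν)`, as an extended real number:
it equals `−∞ = ⊥` when `H(ν) = +∞` (and `H(μ) < ∞`), and `+∞ = ⊤` when `H(μ) = +∞`. -/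
noncomputable def Fval {n : ℕ} (f : Torus n → Torus n → ℝ) (μ ν : Measure (Torus n)) : EReal :=
  if entAdmissible μ then
    (if entAdmissible ν then (((∫ x, ∫ y, f x y ∂ν ∂μ) + Hent μ - Hent ν : ℝ) : EReal) else ⊥)
  else ⊤

/-- The Nikaido–Isoda error `NI(μ,ν) = sup_{ν'} F(μ,ν') − inf_{μ'} F(μ',ν)`, the suprema and
infima being taken over all Borel probability measures on the torus. -/
noncomputable def NIval {n : ℕ} (f : Torus n → Torus n → ℝ) (μ ν : Measure (Torus n)) : EReal :=
  (⨆ ν' ∈ {m : Measure (Torus n) | IsProbabilityMeasure m}, Fval f μ ν')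
    - (⨅ μ' ∈ {m : Measure (Torus n) | IsProbabilityMeasure m}, Fval f μ' ν)

/-- The relative entropy `KL(μ‖π) = ∫ log(dμ/dπ) dμ` (for `μ ≪ π`). -/
noncomputable def KLval {n : ℕ} (μ π : Measure (Torus n)) : ℝ :=
  ∫ x, Real.log ((μ.rnDeriv π x).toReal) ∂μ

section Helpers
open scoped ENNReal NNReal

variable {α : Type*} [MeasurableSpace α]

lemma myIntBdd {μ : Measure α} [IsFiniteMeasure μ] {g : α → ℝ}
    (hm : AEStronglyMeasurable g μ) {C : ℝ} (h : ∀ x, |g x| ≤ C) : Integrable g μ :=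
  (integrable_const C).mono' hm (Filter.Eventually.of_forall fun x => by
    simpa [Real.norm_eq_abs] using h x)

lemma myIntWD {vol : Measure α} {ρ : α → ℝ} (hρm : Measurable ρ) (hρ : ∀ x, 0 ≤ ρ x)
    (g : α → ℝ) :
    ∫ x, g x ∂(vol.withDensity fun y => ENNReal.ofReal (ρ y)) = ∫ x, ρ x * g x ∂vol := by
  have h : (fun y => ENNReal.ofReal (ρ y)) = fun y => ((Real.toNNReal (ρ y) : ℝ≥0) : ℝ≥0∞) := rfl
  rw [h, integral_withDensity_eq_integral_smul (hρm.real_toNNReal) g]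
  refine integral_congr_ae (Filter.Eventually.of_forall fun x => ?_)
  simp [NNReal.smul_def, Real.coe_toNNReal _ (hρ x)]

lemma myDensWD {vol : Measure α} [SigmaFinite vol] {ρ : α → ℝ} (hρm : Measurable ρ)
    (hρ : ∀ x, 0 ≤ ρ x) :
    (fun x => ((vol.withDensity fun y => ENNReal.ofReal (ρ y)).rnDeriv vol x).toReal)
      =ᵐ[vol] ρ := by
  filter_upwards [Measure.rnDeriv_withDensity vol (hρm.ennreal_ofReal)] with x hx
  rw [hx, ENNReal.toReal_ofReal (hρ x)]

lemma myRnDiv {vol μ : Measure α} [SigmaFinite vol] [SigmaFinite μ] {ρ : α → ℝ}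
    [SigmaFinite (vol.withDensity fun y => ENNReal.ofReal (ρ y))]
    (hμ : μ ≪ vol) (hρm : Measurable ρ) (hρpos : ∀ x, 0 < ρ x) :
    μ.rnDeriv (vol.withDensity fun y => ENNReal.ofReal (ρ y))
      =ᵐ[μ] fun x => μ.rnDeriv vol x / ENNReal.ofReal (ρ x) := by
  set g : α → ℝ≥0∞ := fun y => ENNReal.ofReal (ρ y) with hg
  have hgm : Measurable g := hρm.ennreal_ofReal
  have hg0 : ∀ x, g x ≠ 0 := fun x => by
    simp [hg, ENNReal.ofReal_eq_zero, not_le, hρpos x]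
  have hgt : ∀ x, g x ≠ ∞ := fun x => ENNReal.ofReal_ne_top
  have hvolπ : vol ≪ vol.withDensity g :=
    withDensity_absolutelyContinuous' hgm.aemeasurable (Filter.Eventually.of_forall hg0)
  have hμπ : μ ≪ vol.withDensity g := hμ.trans hvolπ
  have hadd : μ = 0 + (vol.withDensity g).withDensity
      (fun x => μ.rnDeriv vol x / g x) := by
    rw [zero_add, show (fun x => μ.rnDeriv vol x / g x) = μ.rnDeriv vol / g from rfl,
      ← withDensity_mul vol hgm ((Measure.measurable_rnDeriv μ vol).div hgm)]
    have h2 : (g * (μ.rnDeriv vol / g)) = μ.rnDeriv vol := funext fun x => by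
      simpa [Pi.mul_apply] using ENNReal.mul_div_cancel (hg0 x) (hgt x)
    rw [h2, Measure.withDensity_rnDeriv_eq μ vol hμ]
  have h := Measure.eq_rnDeriv (ν := vol.withDensity g)
    ((Measure.measurable_rnDeriv μ vol).div hgm) Measure.MutuallySingular.zero_left hadd
  exact hμπ.ae_le h.symm

lemma myKL {vol μ : Measure α} [SigmaFinite vol] [IsFiniteMeasure μ] {ρ : α → ℝ}
    [SigmaFinite (vol.withDensity fun y => ENNReal.ofReal (ρ y))]
    (hμ : μ ≪ vol)
    (hent : Integrable (fun x => (μ.rnDeriv vol x).toReal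
      * Real.log ((μ.rnDeriv vol x).toReal)) vol)
    (hρm : Measurable ρ) (hρpos : ∀ x, 0 < ρ x)
    (hlog : Integrable (fun x => Real.log (ρ x)) μ) :
    ∫ x, Real.log ((μ.rnDeriv (vol.withDensity fun y => ENNReal.ofReal (ρ y)) x).toReal) ∂μ
      = (∫ x, (μ.rnDeriv vol x).toReal * Real.log ((μ.rnDeriv vol x).toReal) ∂vol)
        - ∫ x, Real.log (ρ x) ∂μ := by
  have hrd := myRnDiv hμ hρm hρpos
  have hlt : ∀ᵐ x ∂μ, μ.rnDeriv vol x < ∞ := hμ.ae_le (Measure.rnDeriv_lt_top μ vol)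
  have hpos : ∀ᵐ x ∂μ, 0 < μ.rnDeriv vol x := Measure.rnDeriv_pos hμ
  have hae : (fun x => Real.log
      ((μ.rnDeriv (vol.withDensity fun y => ENNReal.ofReal (ρ y)) x).toReal))
      =ᵐ[μ] fun x => Real.log ((μ.rnDeriv vol x).toReal) - Real.log (ρ x) := by
    filter_upwards [hrd, hlt, hpos] with x h1 h2 h3
    rw [h1, ENNReal.toReal_div, ENNReal.toReal_ofReal (hρpos x).le, Real.log_div
      (ENNReal.toReal_pos h3.ne' h2.ne).ne' (ne_of_gt (hρpos x))]
  have hμeq : vol.withDensity (μ.rnDeriv vol) = μ := Measure.withDensity_rnDeriv_eq μ vol hμ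
  have h1int : Integrable (fun x => Real.log ((μ.rnDeriv vol x).toReal)) μ := by
    have h := (integrable_withDensity_iff (Measure.measurable_rnDeriv μ vol)
      (Measure.rnDeriv_lt_top μ vol)
      (g := fun x => Real.log ((μ.rnDeriv vol x).toReal))).mpr
      (hent.congr (Filter.Eventually.of_forall fun x => (mul_comm _ _)))
    rwa [hμeq] at h
  have hμeq2 : vol.withDensity (fun x => ENNReal.ofReal ((μ.rnDeriv vol x).toReal)) = μ := by
    have hcg : (fun x => ENNReal.ofReal ((μ.rnDeriv vol x).toReal)) =ᵐ[vol] μ.rnDeriv vol := by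
      filter_upwards [Measure.rnDeriv_lt_top μ vol] with x hx
      rw [ENNReal.ofReal_toReal hx.ne]
    rw [withDensity_congr_ae hcg, hμeq]
  have key : ∫ x, Real.log ((μ.rnDeriv vol x).toReal) ∂μ
      = ∫ x, (μ.rnDeriv vol x).toReal * Real.log ((μ.rnDeriv vol x).toReal) ∂vol := by
    have h := myIntWD (vol := vol) (ρ := fun x => (μ.rnDeriv vol x).toReal)
      ((Measure.measurable_rnDeriv μ vol).ennreal_toReal) (fun x => ENNReal.toReal_nonneg)
      (fun x => Real.log ((μ.rnDeriv vol x).toReal))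
    rwa [hμeq2] at h
  rw [integral_congr_ae hae, integral_sub h1int hlog, key]

end Helpers

instance : IsProbabilityMeasure (volume : Measure (AddCircle (1:ℝ))) :=
  ⟨by rw [AddCircle.measure_univ]; simp⟩

/-- **Relative entropy is bounded by the Nikaido–Isoda error at the Gibbs fixed point.**
If `μ* = ρ* dx` and `ν* = η* dx` satisfy the Gibbs fixed-point relations
`ρ* = e^{−V_{ν*}}/∫e^{−V_{ν*}}` and `η* = e^{U_{μ*}}/∫e^{U_{μ*}}`, then for all absolutely
continuous probability measures `μ, ν` of finite entropy,
`KL(μ‖μ*) + KL(ν‖ν*) ≤ NI(μ,ν)`. -/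
theorem stmt14 (n : ℕ) (f : Torus n → Torus n → ℝ)
    (hf : Continuous fun p : Torus n × Torus n => f p.1 p.2)
    (ρstar ηstar : Torus n → ℝ) (hρm : Measurable ρstar) (hηm : Measurable ηstar)
    (hμstar : IsProbabilityMeasure (volume.withDensity fun x => ENNReal.ofReal (ρstar x)))
    (hνstar : IsProbabilityMeasure (volume.withDensity fun y => ENNReal.ofReal (ηstar y)))
    (hρfix : ∀ x, ρstar x
        = Real.exp (-(∫ y, f x y ∂(volume.withDensity fun y' => ENNReal.ofReal (ηstar y'))))
          / ∫ z, Real.exp (-(∫ y, f z y ∂(volume.withDensity fun y' => ENNReal.ofReal (ηstar y')))))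
    (hηfix : ∀ y, ηstar y
        = Real.exp (∫ x, f x y ∂(volume.withDensity fun x' => ENNReal.ofReal (ρstar x')))
          / ∫ z, Real.exp (∫ x, f x z ∂(volume.withDensity fun x' => ENNReal.ofReal (ρstar x'))))
    (μ ν : Measure (Torus n))
    (hμ : IsProbabilityMeasure μ) (hν : IsProbabilityMeasure ν)
    (hμH : entAdmissible μ) (hνH : entAdmissible ν) :
    ((KLval μ (volume.withDensity fun x => ENNReal.ofReal (ρstar x))
        + KLval ν (volume.withDensity fun y => ENNReal.ofReal (ηstar y)) : ℝ) : EReal)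
      ≤ NIval f μ ν := by
  classical
  haveI := hμstar
  haveI := hνstar
  set μs : Measure (Torus n) := volume.withDensity fun x => ENNReal.ofReal (ρstar x) with hμsdef
  set νs : Measure (Torus n) := volume.withDensity fun y => ENNReal.ofReal (ηstar y) with hνsdef
  -- bound on f
  obtain ⟨p0, -, hp0⟩ := isCompact_univ.exists_isMaxOn Set.univ_nonempty hf.norm.continuousOn
  set M : ℝ := ‖f p0.1 p0.2‖ with hMdef
  have hM : ∀ x y, |f x y| ≤ M := fun x y => by simpa [hMdef] using hp0 (Set.mem_univ (x, y))
  -- the potentials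
  set V : Torus n → ℝ := fun x => ∫ y, f x y ∂νs with hVdef
  set U : Torus n → ℝ := fun y => ∫ x, f x y ∂μs with hUdef
  set Zρ : ℝ := ∫ z, Real.exp (-(V z)) with hZρdef
  set Zη : ℝ := ∫ z, Real.exp (U z) with hZηdef
  have hfsm : StronglyMeasurable (Function.uncurry f) := hf.stronglyMeasurable
  have hρfix' : ∀ x, ρstar x = Real.exp (-(V x)) / Zρ := hρfix
  have hηfix' : ∀ y, ηstar y = Real.exp (U y) / Zη := hηfix
  have hVsm : StronglyMeasurable V := hfsm.integral_prod_right
  have hUsm : StronglyMeasurable U := hfsm.integral_prod_left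
  have hVb : ∀ x, |V x| ≤ M := by
    intro x
    have h := norm_integral_le_of_norm_le_const (μ := νs) (f := fun y => f x y) (C := M)
      (Filter.Eventually.of_forall fun y => by simpa [Real.norm_eq_abs] using hM x y)
    simpa [Real.norm_eq_abs, measure_univ] using h
  have hUb : ∀ y, |U y| ≤ M := by
    intro y
    have h := norm_integral_le_of_norm_le_const (μ := μs) (f := fun x => f x y) (C := M)
      (Filter.Eventually.of_forall fun x => by simpa [Real.norm_eq_abs] using hM x y)
    simpa [Real.norm_eq_abs, measure_univ] using h
  -- positivity of the normalizing constants
  have hexpVint : Integrable (fun z => Real.exp (-(V z))) volume :=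
    myIntBdd (Real.continuous_exp.comp_stronglyMeasurable hVsm.neg).aestronglyMeasurable
      (C := Real.exp M) (fun z => by
        rw [abs_of_pos (Real.exp_pos _)]
        exact Real.exp_le_exp.mpr (by linarith [(abs_le.mp (hVb z)).1]))
  have hexpUint : Integrable (fun z => Real.exp (U z)) volume :=
    myIntBdd (Real.continuous_exp.comp_stronglyMeasurable hUsm).aestronglyMeasurable
      (C := Real.exp M) (fun z => by
        rw [abs_of_pos (Real.exp_pos _)]
        exact Real.exp_le_exp.mpr (by linarith [(abs_le.mp (hUb z)).2]))
  have hZρ_pos : 0 < Zρ := by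
    have h1 : ∀ z, Real.exp (-M) ≤ Real.exp (-(V z)) := fun z =>
      Real.exp_le_exp.mpr (by linarith [(abs_le.mp (hVb z)).2])
    calc (0:ℝ) < Real.exp (-M) := Real.exp_pos _
      _ = ∫ _z : Torus n, Real.exp (-M) := by simp
      _ ≤ Zρ := integral_mono (integrable_const _) hexpVint h1
  have hZη_pos : 0 < Zη := by
    have h1 : ∀ z, Real.exp (-M) ≤ Real.exp (U z) := fun z =>
      Real.exp_le_exp.mpr (by linarith [(abs_le.mp (hUb z)).1])
    calc (0:ℝ) < Real.exp (-M) := Real.exp_pos _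
      _ = ∫ _z : Torus n, Real.exp (-M) := by simp
      _ ≤ Zη := integral_mono (integrable_const _) hexpUint h1
  have hρpos : ∀ x, 0 < ρstar x := fun x => by
    rw [hρfix' x]; exact div_pos (Real.exp_pos _) hZρ_pos
  have hηpos : ∀ y, 0 < ηstar y := fun y => by
    rw [hηfix' y]; exact div_pos (Real.exp_pos _) hZη_pos
  have hlogρ : ∀ x, Real.log (ρstar x) = -(V x) - Real.log Zρ := fun x => by
    rw [hρfix' x, Real.log_div (Real.exp_ne_zero _) (ne_of_gt hZρ_pos), Real.log_exp]
  have hlogη : ∀ y, Real.log (ηstar y) = U y - Real.log Zη := fun y => by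
    rw [hηfix' y, Real.log_div (Real.exp_ne_zero _) (ne_of_gt hZη_pos), Real.log_exp]
  -- integrals of the potentials and of log-densities
  have hVint : ∀ (m : Measure (Torus n)) [IsProbabilityMeasure m], Integrable V m :=
    fun m _ => myIntBdd hVsm.aestronglyMeasurable hVb
  have hUint : ∀ (m : Measure (Torus n)) [IsProbabilityMeasure m], Integrable U m :=
    fun m _ => myIntBdd hUsm.aestronglyMeasurable hUb
  have hlogρint : ∀ (m : Measure (Torus n)) [IsProbabilityMeasure m],
      Integrable (fun x => Real.log (ρstar x)) m := fun m _ =>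
    myIntBdd (Real.measurable_log.comp hρm).aestronglyMeasurable
      (C := M + |Real.log Zρ|) (fun x => by
        rw [hlogρ x]
        calc |(-(V x)) - Real.log Zρ| ≤ |(-(V x))| + |Real.log Zρ| := abs_sub _ _
          _ ≤ M + |Real.log Zρ| := by rw [abs_neg]; linarith [hVb x])
  have hlogηint : ∀ (m : Measure (Torus n)) [IsProbabilityMeasure m],
      Integrable (fun y => Real.log (ηstar y)) m := fun m _ =>
    myIntBdd (Real.measurable_log.comp hηm).aestronglyMeasurable
      (C := M + |Real.log Zη|) (fun y => by
        rw [hlogη y]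
        calc |U y - Real.log Zη| ≤ |U y| + |Real.log Zη| := abs_sub _ _
          _ ≤ M + |Real.log Zη| := by linarith [hUb y])
  have hlogρ_eq : ∀ (m : Measure (Torus n)) [IsProbabilityMeasure m],
      ∫ x, Real.log (ρstar x) ∂m = -(∫ x, V x ∂m) - Real.log Zρ := by
    intro m _
    rw [show (fun x => Real.log (ρstar x)) = fun x => -(V x) - Real.log Zρ from
      funext fun x => hlogρ x]
    have h2 : ∫ x, (-(V x) - Real.log Zρ) ∂m = (∫ x, -(V x) ∂m) - ∫ _x, Real.log Zρ ∂m :=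
      integral_sub ((hVint m).neg) (integrable_const _)
    rw [h2, integral_neg, integral_const]
    simp
  have hlogη_eq : ∀ (m : Measure (Torus n)) [IsProbabilityMeasure m],
      ∫ y, Real.log (ηstar y) ∂m = (∫ y, U y ∂m) - Real.log Zη := by
    intro m _
    rw [show (fun y => Real.log (ηstar y)) = fun y => U y - Real.log Zη from
      funext fun y => hlogη y]
    have h2 : ∫ y, (U y - Real.log Zη) ∂m = (∫ y, U y ∂m) - ∫ _y, Real.log Zη ∂m :=
      integral_sub (hUint m) (integrable_const _)
    rw [h2, integral_const]
    simp
  -- KL decompositions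
  have hKLμ : KLval μ μs = Hent μ - ∫ x, Real.log (ρstar x) ∂μ := by
    have h := myKL (vol := (volume : Measure (Torus n))) (μ := μ) hμH.1 hμH.2 hρm hρpos
      (hlogρint μ)
    exact h
  have hKLν : KLval ν νs = Hent ν - ∫ y, Real.log (ηstar y) ∂ν := by
    have h := myKL (vol := (volume : Measure (Torus n))) (μ := ν) hνH.1 hνH.2 hηm hηpos
      (hlogηint ν)
    exact h
  -- densities of the Gibbs measures
  have hdμs := myDensWD (vol := (volume : Measure (Torus n))) hρm (fun x => (hρpos x).le)
  have hdνs := myDensWD (vol := (volume : Measure (Torus n))) hηm (fun y => (hηpos y).le)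
  -- the Gibbs measures are admissible
  have hρb : ∀ x, ρstar x ≤ Real.exp M / Zρ := fun x => by
    rw [hρfix' x]
    exact div_le_div_of_nonneg_right
      (Real.exp_le_exp.mpr (by linarith [(abs_le.mp (hVb x)).1])) hZρ_pos.le
  have hηb : ∀ y, ηstar y ≤ Real.exp M / Zη := fun y => by
    rw [hηfix' y]
    exact div_le_div_of_nonneg_right
      (Real.exp_le_exp.mpr (by linarith [(abs_le.mp (hUb y)).2])) hZη_pos.le
  have hρlogb : ∀ x, |ρstar x * Real.log (ρstar x)|
      ≤ (Real.exp M / Zρ) * (M + |Real.log Zρ|) := fun x => by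
    rw [abs_mul]
    refine mul_le_mul ?_ ?_ (abs_nonneg _) (by positivity)
    · rw [abs_of_pos (hρpos x)]; exact hρb x
    · rw [hlogρ x]
      calc |(-(V x)) - Real.log Zρ| ≤ |(-(V x))| + |Real.log Zρ| := abs_sub _ _
        _ ≤ M + |Real.log Zρ| := by rw [abs_neg]; linarith [hVb x]
  have hηlogb : ∀ y, |ηstar y * Real.log (ηstar y)|
      ≤ (Real.exp M / Zη) * (M + |Real.log Zη|) := fun y => by
    rw [abs_mul]
    refine mul_le_mul ?_ ?_ (abs_nonneg _) (by positivity)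
    · rw [abs_of_pos (hηpos y)]; exact hηb y
    · rw [hlogη y]
      calc |U y - Real.log Zη| ≤ |U y| + |Real.log Zη| := abs_sub _ _
        _ ≤ M + |Real.log Zη| := by linarith [hUb y]
  have hμsAdm : entAdmissible μs := by
    refine ⟨withDensity_absolutelyContinuous _ _, ?_⟩
    refine (myIntBdd ((hρm.mul (Real.measurable_log.comp hρm)).aestronglyMeasurable)
      hρlogb).congr ?_
    filter_upwards [hdμs] with x hx
    simp only [density]
    rw [hx]
    rfl
  have hνsAdm : entAdmissible νs := by
    refine ⟨withDensity_absolutelyContinuous _ _, ?_⟩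
    refine (myIntBdd ((hηm.mul (Real.measurable_log.comp hηm)).aestronglyMeasurable)
      hηlogb).congr ?_
    filter_upwards [hdνs] with y hy
    simp only [density]
    rw [hy]
    rfl
  -- entropy of the Gibbs measures
  have hHμs : Hent μs = -(∫ x, V x ∂μs) - Real.log Zρ := by
    have h1 : Hent μs = ∫ x, ρstar x * Real.log (ρstar x) := by
      refine integral_congr_ae ?_
      filter_upwards [hdμs] with x hx
      simp only [density]
      rw [hx]
    have h2 : ∫ x, ρstar x * Real.log (ρstar x)
        = ∫ x, Real.log (ρstar x) ∂μs :=
      (myIntWD hρm (fun x => (hρpos x).le) _).symm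
    rw [h1, h2, hlogρ_eq μs]
  have hHνs : Hent νs = (∫ y, U y ∂νs) - Real.log Zη := by
    have h1 : Hent νs = ∫ y, ηstar y * Real.log (ηstar y) := by
      refine integral_congr_ae ?_
      filter_upwards [hdνs] with y hy
      simp only [density]
      rw [hy]
    have h2 : ∫ y, ηstar y * Real.log (ηstar y)
        = ∫ y, Real.log (ηstar y) ∂νs :=
      (myIntWD hηm (fun y => (hηpos y).le) _).symm
    rw [h1, h2, hlogη_eq νs]
  -- Fubini
  have hswap : ∀ (p q : Measure (Torus n)) [IsProbabilityMeasure p] [IsProbabilityMeasure q],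
      ∫ x, ∫ y, f x y ∂q ∂p = ∫ y, ∫ x, f x y ∂p ∂q := by
    intro p q hp hq
    refine integral_integral_swap ?_
    exact myIntBdd hf.aestronglyMeasurable (C := M) (fun z => hM z.1 z.2)
  have hF1 : ∫ x, ∫ y, f x y ∂ν ∂μs = ∫ y, U y ∂ν := hswap μs ν
  have hF2 : ∫ x, V x ∂μs = ∫ y, U y ∂νs := hswap μs νs
  -- values of F
  have hFa : Fval f μ νs = (((∫ x, V x ∂μ) + Hent μ - Hent νs : ℝ) : EReal) := by
    simp only [Fval, if_pos hμH, if_pos hνsAdm, hVdef]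
  have hFb : Fval f μs ν = (((∫ x, ∫ y, f x y ∂ν ∂μs) + Hent μs - Hent ν : ℝ) : EReal) := by
    simp only [Fval, if_pos hμsAdm, if_pos hνH]
  -- bounds by sup and inf
  have hb1 : Fval f μ νs ≤ ⨆ ν' ∈ {m : Measure (Torus n) | IsProbabilityMeasure m}, Fval f μ ν' :=
    le_iSup₂ (f := fun ν' _ => Fval f μ ν') νs hνstar
  have hb2 : (⨅ μ' ∈ {m : Measure (Torus n) | IsProbabilityMeasure m}, Fval f μ' ν)
      ≤ Fval f μs ν :=
    iInf₂_le (f := fun μ' _ => Fval f μ' ν) μs hμstar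
  rw [NIval]
  refine le_trans ?_ (EReal.sub_le_sub hb1 hb2)
  rw [hFa, hFb, ← EReal.coe_sub, EReal.coe_le_coe_iff]
  have e1 := hKLμ
  have e2 := hKLν
  have e3 := hlogρ_eq μ
  have e4 := hlogη_eq ν
  linarith
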